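/- Method invocation (SemInv): let α = [m_d :ν_d τ_d]_{d∈D} be an object type with each τ_d a semantic type. If Σ ⊨ a : α, e ∈ D and ν_e ∈ {cov, inv}, then Σ ⊨ a.m_e : τ_e. -/

import Mathlib

set_option maxHeartbeats 1000000

namespace ImpObj

/-! # Syntax of the imperative object calculus (type annotations erased) -/

abbrev Var := ℕ
abbrev MethName := ℕ
abbrev Loc := ℕ

inductive Variance : Type where
  | inv | cov | con
  deriving DecidableEq

inductive Tm : Type where
  | var    : Var → Tm
  | obj    : Finset MethName → (MethName → Var) → (MethName → Tm) → Tm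
  | vobj   : Finset MethName → (MethName → Loc) → Tm
  | inv    : Tm → MethName → Tm
  | upd    : Tm → MethName → Var → Tm → Tm
  | clone  : Tm → Tm
  | lam    : Var → Tm → Tm
  | app    : Tm → Tm → Tm
  | fold   : Tm → Tm
  | unfd   : Tm → Tm
  | tlam   : Tm → Tm
  | tapp   : Tm → Tm
  | pack   : Tm → Tm
  | opn    : Tm → Var → Tm → Tm

/-- Free (term) variables. -/
def fv : Tm → Set Var
  | .var x => {x}
  | .obj D xs bs => ⋃ d ∈ D, (fv (bs d) \ {xs d})
  | .vobj _ _ => ∅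
  | .inv a _ => fv a
  | .upd a _ x b => fv a ∪ (fv b \ {x})
  | .clone a => fv a
  | .lam x b => fv b \ {x}
  | .app a b => fv a ∪ fv b
  | .fold a => fv a
  | .unfd a => fv a
  | .tlam a => fv a
  | .tapp a => fv a
  | .pack a => fv a
  | .opn a x b => fv a ∪ (fv b \ {x})

/-- Heap locations occurring in a term. -/
def locs : Tm → Set Loc
  | .var _ => ∅
  | .obj D _ bs => ⋃ d ∈ D, locs (bs d)
  | .vobj E ls => ls '' ↑E
  | .inv a _ => locs a
  | .upd a _ _ b => locs a ∪ locs b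
  | .clone a => locs a
  | .lam _ b => locs b
  | .app a b => locs a ∪ locs b
  | .fold a => locs a
  | .unfd a => locs a
  | .tlam a => locs a
  | .tapp a => locs a
  | .pack a => locs a
  | .opn a _ b => locs a ∪ locs b

/-- Values. -/
inductive IsVal : Tm → Prop where
  | vobj (E : Finset MethName) (ls : MethName → Loc) : IsVal (.vobj E ls)
  | lam (x : Var) (b : Tm) : IsVal (.lam x b)
  | fold {v : Tm} : IsVal v → IsVal (.fold v)
  | tlam (b : Tm) : IsVal (.tlam b)
  | pack {v : Tm} : IsVal v → IsVal (.pack v)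

/-- Closed values. -/
def CVal : Type := {v : Tm // IsVal v ∧ fv v = ∅}

/-- A run-time object is a closed value. -/
def CVal.mkVObj (E : Finset MethName) (ls : MethName → Loc) : CVal :=
  ⟨.vobj E ls, IsVal.vobj E ls, by simp [fv]⟩

def removeKey (σ : Var → Option Tm) (x : Var) : Var → Option Tm :=
  fun y => if y = x then none else σ y

/-- Simultaneous substitution of (closed) terms for free variables. -/
def msubst : Tm → (Var → Option Tm) → Tm
  | .var x, σ => (σ x).getD (.var x)
  | .obj D xs bs, σ => .obj D xs fun d => msubst (bs d) (removeKey σ (xs d))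
  | .vobj E ls, _ => .vobj E ls
  | .inv a m, σ => .inv (msubst a σ) m
  | .upd a m x b, σ => .upd (msubst a σ) m x (msubst b (removeKey σ x))
  | .clone a, σ => .clone (msubst a σ)
  | .lam x b, σ => .lam x (msubst b (removeKey σ x))
  | .app a b, σ => .app (msubst a σ) (msubst b σ)
  | .fold a, σ => .fold (msubst a σ)
  | .unfd a, σ => .unfd (msubst a σ)
  | .tlam a, σ => .tlam (msubst a σ)
  | .tapp a, σ => .tapp (msubst a σ)
  | .pack a, σ => .pack (msubst a σ)
  | .opn a x b, σ => .opn (msubst a σ) x (msubst b (removeKey σ x))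

def subst1 (b : Tm) (x : Var) (v : Tm) : Tm :=
  msubst b fun y => if y = x then some v else none

/-! # Heaps and small-step operational semantics -/

/-- Heaps: finite maps from locations to closed values. -/
structure Heap where
  fn : Loc → Option CVal
  fin : Set.Finite {l | fn l ≠ none}

def Heap.get? (h : Heap) (l : Loc) : Option Tm := (h.fn l).map Subtype.val

abbrev Config := Heap × Tm

/-- Evaluation contexts (left-to-right, call-by-value). -/
inductive ECtx : Type where
  | hole : ECtx
  | inv : ECtx → MethName → ECtx
  | upd : ECtx → MethName → Var → Tm → ECtx
  | clone : ECtx → ECtx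
  | appL : ECtx → Tm → ECtx
  | appR : (v : Tm) → IsVal v → ECtx → ECtx
  | fold : ECtx → ECtx
  | unfd : ECtx → ECtx
  | tapp : ECtx → ECtx
  | pack : ECtx → ECtx
  | opn : ECtx → Var → Tm → ECtx

def ECtx.plug : ECtx → Tm → Tm
  | .hole, a => a
  | .inv E m, a => .inv (E.plug a) m
  | .upd E m x b, a => .upd (E.plug a) m x b
  | .clone E, a => .clone (E.plug a)
  | .appL E b, a => .app (E.plug a) b
  | .appR v _ E, a => .app v (E.plug a)
  | .fold E, a => .fold (E.plug a)
  | .unfd E, a => .unfd (E.plug a)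
  | .tapp E, a => .tapp (E.plug a)
  | .pack E, a => .pack (E.plug a)
  | .opn E x b, a => .opn (E.plug a) x b

/-- Head (redex) reductions. -/
inductive Head : Config → Config → Prop where
  | obj {h h' : Heap} {D : Finset MethName} {xs : MethName → Var} {bs : MethName → Tm}
      {ls : MethName → Loc} :
      (∀ d ∈ D, h.fn (ls d) = none) →
      Set.InjOn ls ↑D →
      (∀ d ∈ D, h'.get? (ls d) = some (.lam (xs d) (bs d))) →
      (∀ l : Loc, (∀ d ∈ D, ls d ≠ l) → h'.fn l = h.fn l) →
      Head (h, .obj D xs bs) (h', .vobj D ls)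
  | inv {h : Heap} {E : Finset MethName} {ls : MethName → Loc} {e : MethName} {f : Tm} :
      e ∈ E → h.get? (ls e) = some f →
      Head (h, .inv (.vobj E ls) e) (h, .app f (.vobj E ls))
  | upd {h h' : Heap} {E : Finset MethName} {ls : MethName → Loc} {e : MethName}
      {x : Var} {b : Tm} :
      e ∈ E →
      h'.get? (ls e) = some (.lam x b) →
      (∀ l : Loc, l ≠ ls e → h'.fn l = h.fn l) →
      Head (h, .upd (.vobj E ls) e x b) (h', .vobj E ls)
  | clone {h h' : Heap} {E : Finset MethName} {ls ls' : MethName → Loc} :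
      (∀ e ∈ E, h.fn (ls' e) = none) →
      Set.InjOn ls' ↑E →
      (∀ e ∈ E, h'.fn (ls' e) = h.fn (ls e)) →
      (∀ l : Loc, (∀ e ∈ E, ls' e ≠ l) → h'.fn l = h.fn l) →
      Head (h, .clone (.vobj E ls)) (h', .vobj E ls')
  | beta {h : Heap} {x : Var} {b v : Tm} :
      IsVal v → Head (h, .app (.lam x b) v) (h, subst1 b x v)
  | unfold {h : Heap} {v : Tm} : IsVal v → Head (h, .unfd (.fold v)) (h, v)
  | tbeta {h : Heap} {b : Tm} : Head (h, .tapp (.tlam b)) (h, b)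
  | openv {h : Heap} {v : Tm} {x : Var} {b : Tm} :
      IsVal v → Head (h, .opn (.pack v) x b) (h, subst1 b x v)

/-- One-step reduction: closure of head reduction under evaluation contexts. -/
inductive Step : Config → Config → Prop where
  | ctx {h h' : Heap} {a a' : Tm} (E : ECtx) :
      Head (h, a) (h', a') → Step (h, E.plug a) (h', E.plug a')

/-- `k`-step reduction. -/
inductive StepN : ℕ → Config → Config → Prop where
  | refl (c : Config) : StepN 0 c c
  | tail {n : ℕ} {c c' c'' : Config} : StepN n c c' → Step c' c'' → StepN (n + 1) c c''

def Irred (c : Config) : Prop := ¬ ∃ c', Step c c'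

/-- Safe for `k` steps. -/
def SafeN (c : Config) (k : ℕ) : Prop :=
  ∀ j < k, ∀ c' : Config, StepN j c c' → Irred c' → IsVal c'.2

/-- Safe (for any number of steps). -/
def Safe (c : Config) : Prop := ∀ k, SafeN c k

/-! # The stratified step-indexed universe of pre-types -/

/-- `Approx k` is (the type of elements of) `PreType_k`: sets of triples `(j, Ψ, v)`
with `j < k` and `Ψ ∈ HeapPreTyping_j` a finite map from locations to `PreType_j`. -/
def Approx : ℕ → Type :=
  WellFounded.fix (Nat.lt_wfRel.wf) fun k ih =>
    Set ((j : Fin k) × ({Ψ : Loc → Option (ih j.1 j.isLt) // Set.Finite {l | Ψ l ≠ none}} × CVal))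

/-- Heap pre-typings of level `j`: finite maps from locations to `PreType_j`. -/
def HPT (j : ℕ) : Type :=
  {Ψ : Loc → Option (Approx j) // Set.Finite {l | Ψ l ≠ none}}

theorem Approx_eq (k : ℕ) :
    Approx k = Set ((j : Fin k) × (HPT j.1 × CVal)) :=
  WellFounded.fix_eq _ _ _

def Approx.out {k : ℕ} (S : Approx k) : Set ((j : Fin k) × (HPT j.1 × CVal)) :=
  cast (Approx_eq k) S

def Approx.mk' {k : ℕ} (S : Set ((j : Fin k) × (HPT j.1 × CVal))) : Approx k :=
  cast (Approx_eq k).symm S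

/-- Triples `(j, Ψ, v)` with `Ψ ∈ HeapPreTyping_j` and `v` a closed value. -/
def Triple : Type := (j : ℕ) × (HPT j × CVal)

/-- Pre-types: arbitrary sets of triples. -/
abbrev PreType : Type := Set Triple

/-- View an element of `PreType_k` as a pre-type. -/
def Approx.seg {k : ℕ} (S : Approx k) : PreType :=
  {t | ∃ hlt : t.1 < k, (⟨⟨t.1, hlt⟩, t.2⟩ : (j : Fin k) × (HPT j.1 × CVal)) ∈ S.out}

/-- The `k`-th approximation `⌊τ⌋_k` of a pre-type. -/
def papprox (τ : PreType) (k : ℕ) : PreType := {t ∈ τ | t.1 < k}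

/-- The `k`-th approximation of a pre-type, as an element of `PreType_k`. -/
def toApprox (τ : PreType) (k : ℕ) : Approx k :=
  Approx.mk' {p | (⟨p.1.1, p.2⟩ : Triple) ∈ τ}

def HPT.dom {k : ℕ} (Ψ : HPT k) : Set Loc := {l | Ψ.1 l ≠ none}

/-- `Ψ(l)`, viewed as a pre-type. -/
def HPT.look {k : ℕ} (Ψ : HPT k) (l : Loc) : Option PreType := (Ψ.1 l).map Approx.seg

/-- `⌊Ψ⌋_j(l) = ⌊Ψ(l)⌋_j`, viewed as a pre-type. -/
def HPT.lookA {k : ℕ} (Ψ : HPT k) (j : ℕ) (l : Loc) : Option PreType :=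
  (Ψ.look l).map (papprox · j)

/-- Pointwise approximation `⌊Ψ⌋_j` of a heap pre-typing. -/
def HPT.trunc {k : ℕ} (Ψ : HPT k) (j : ℕ) : HPT j :=
  ⟨fun l => (Ψ.1 l).map fun S => toApprox (Approx.seg S) j, by
    apply Ψ.2.subset
    intro l hl
    simp only [Set.mem_setOf_eq] at hl ⊢
    intro h0
    rw [h0] at hl
    exact hl rfl⟩

/-- A state `(k, Ψ)`. -/
structure St where
  k : ℕ
  Ψ : HPT k

/-- State extension `(k, Ψ) ⊑ (j, Ψ')`. -/
def StExt (s t : St) : Prop :=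
  t.k ≤ s.k ∧ s.Ψ.dom ⊆ t.Ψ.dom ∧ ∀ l ∈ s.Ψ.dom, t.Ψ.lookA t.k l = s.Ψ.lookA t.k l

/-- Semantic types: pre-types closed under state extension. -/
def IsSemType (τ : PreType) : Prop :=
  ∀ t ∈ τ, ∀ (j : ℕ) (Ψ' : HPT j),
    StExt ⟨t.1, t.2.1⟩ ⟨j, Ψ'⟩ → (⟨j, Ψ', t.2.2⟩ : Triple) ∈ τ

/-- Heap typings: heap pre-typings all of whose entries are semantic types. -/
def HPT.IsTy {k : ℕ} (Ψ : HPT k) : Prop :=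
  ∀ l S, Ψ.1 l = some S → IsSemType (Approx.seg S)

/-- Well-typed heap `h :_k Ψ`. -/
def HeapOk (h : Heap) {k : ℕ} (Ψ : HPT k) : Prop :=
  (∀ l ∈ Ψ.dom, h.fn l ≠ none) ∧
  ∀ j < k, ∀ l S, Ψ.1 l = some S → ∀ v : CVal, h.fn l = some v →
    (⟨j, Ψ.trunc j, v⟩ : Triple) ∈ Approx.seg S

/-- A closed term has type `τ` with respect to the state `(k, Ψ)`:  `a :_{k,Ψ} τ`. -/
def HasTypeAt (a : Tm) {k : ℕ} (Ψ : HPT k) (τ : PreType) : Prop :=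
  ∀ j < k, ∀ (h h' : Heap) (b : Tm),
    HeapOk h Ψ → StepN j (h, a) (h', b) → Irred (h', b) →
    ∃ Ψ' : HPT (k - j), Ψ'.IsTy ∧ StExt ⟨k, Ψ⟩ ⟨k - j, Ψ'⟩ ∧ HeapOk h' Ψ' ∧
      ∃ hb : IsVal b ∧ fv b = ∅, (⟨k - j, Ψ', ⟨b, hb⟩⟩ : Triple) ∈ τ

/-! # Semantic typing judgement -/

/-- Semantic type environments. -/
def SemEnv : Type := Var → Option PreType

/-- All types in the environment are semantic types. -/
def EnvSem (Γ : SemEnv) : Prop := ∀ x τ, Γ x = some τ → IsSemType τ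

def envExt (Γ : SemEnv) (x : Var) (τ : PreType) : SemEnv :=
  fun y => if y = x then some τ else Γ y

/-- Value environments. -/
def VEnv : Type := Var → Option CVal

/-- `σ :_{k,Ψ} Σ`. -/
def EnvOk (σ : VEnv) {k : ℕ} (Ψ : HPT k) (Γ : SemEnv) : Prop :=
  ∀ x τ, Γ x = some τ → ∃ v : CVal, σ x = some v ∧ HasTypeAt v.1 Ψ τ

def toSubst (σ : VEnv) : Var → Option Tm := fun x => (σ x).map Subtype.val

/-- The semantic typing judgement `Σ ⊨ a : τ`. -/
def SemJudg (Γ : SemEnv) (a : Tm) (τ : PreType) : Prop :=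
  fv a ⊆ {x | Γ x ≠ none} ∧
  ∀ (k : ℕ) (Ψ : HPT k), Ψ.IsTy → ∀ σ : VEnv, EnvOk σ Ψ Γ →
    HasTypeAt (msubst a (toSubst σ)) Ψ τ

/-! # Semantic type constructors -/

def botTy : PreType := ∅
def topTy : PreType := Set.univ

/-- Procedure types `α → β`. -/
def arrTy (α β : PreType) : PreType :=
  {t | ∃ (x : Var) (b : Tm), t.2.2.1 = Tm.lam x b ∧
    ∀ j < t.1, ∀ Ψ' : HPT j, Ψ'.IsTy → ∀ v : CVal,
      StExt ⟨t.1, t.2.1⟩ ⟨j, Ψ'⟩ → (⟨j, Ψ', v⟩ : Triple) ∈ α →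
      HasTypeAt (subst1 b x v.1) Ψ' β}

/-- "Triples" whose value component is a heap location. -/
def RefEl : Type := (k : ℕ) × (HPT k × Loc)

/-- Invariant reference types. -/
def refInv (τ : PreType) : Set RefEl :=
  {p | ∃ S, p.2.1.1 p.2.2 = some S ∧ papprox (Approx.seg S) p.1 = papprox τ p.1}

/-- Readable (covariant) reference types. -/
def refCov (τ : PreType) : Set RefEl :=
  {p | ∃ S, p.2.1.1 p.2.2 = some S ∧ papprox (Approx.seg S) p.1 ⊆ papprox τ p.1}

/-- Writable (contravariant) reference types. -/
def refCon (τ : PreType) : Set RefEl :=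
  {p | ∃ S, p.2.1.1 p.2.2 = some S ∧ papprox τ p.1 ⊆ papprox (Approx.seg S) p.1}

def refTy : Variance → PreType → Set RefEl
  | .inv => refInv
  | .cov => refCov
  | .con => refCon

/-- Generalized reference types `ref(τʷ, τʳ)`. -/
def refGen (τw τr : PreType) : Set RefEl := refTy .con τw ∩ refTy .cov τr

/-- Closure under state extension for sets of location-triples. -/
def RefClosed (R : Set RefEl) : Prop :=
  ∀ p ∈ R, ∀ (j : ℕ) (Ψ' : HPT j),
    StExt ⟨p.1, p.2.1⟩ ⟨j, Ψ'⟩ → (⟨j, Ψ', p.2.2⟩ : RefEl) ∈ R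

/-- Object types `[m_d :ν_d τ_d]_{d∈D}` (membership of `(k, Ψ, w)`). -/
def objSlice (D : Finset MethName) (ν : MethName → Variance) (τs : MethName → PreType)
    (k : ℕ) (Ψ : HPT k) (w : CVal) : Prop :=
  ∃ (E : Finset MethName) (ls : MethName → Loc),
    w.1 = Tm.vobj E ls ∧ D ⊆ E ∧
    ∃ α' : PreType, IsSemType α' ∧
      papprox α' k ⊆ {t : Triple | ∃ _hlt : t.1 < k, objSlice D ν τs t.1 t.2.1 t.2.2} ∧
      (∀ d ∈ D, (⟨k, Ψ, ls d⟩ : RefEl) ∈ refTy (ν d) (arrTy α' (τs d))) ∧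
      (∀ j, ∀ _hj : j < k, ∀ Ψ' : HPT j, ∀ ls' : MethName → Loc,
        StExt ⟨k, Ψ⟩ ⟨j, Ψ'⟩ →
        (∀ e ∈ E, Ψ'.lookA j (ls' e) = Ψ.lookA j (ls e)) →
        (⟨j, Ψ'.trunc j, CVal.mkVObj E ls'⟩ : Triple) ∈ α')
  termination_by k
  decreasing_by exact _hlt

def objTy (D : Finset MethName) (ν : MethName → Variance) (τs : MethName → PreType) :
    PreType :=
  {t | objSlice D ν τs t.1 t.2.1 t.2.2}

/-- Generalized object types `[m_d : τʷ_d / τʳ_d]_{d∈D}` (membership of `(k, Ψ, w)`). -/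
def objSliceG (D : Finset MethName) (τw τr : MethName → PreType)
    (k : ℕ) (Ψ : HPT k) (w : CVal) : Prop :=
  ∃ (E : Finset MethName) (ls : MethName → Loc),
    w.1 = Tm.vobj E ls ∧ D ⊆ E ∧
    ∃ α' : PreType, IsSemType α' ∧
      papprox α' k ⊆ {t : Triple | ∃ _hlt : t.1 < k, objSliceG D τw τr t.1 t.2.1 t.2.2} ∧
      (∀ d ∈ D, (⟨k, Ψ, ls d⟩ : RefEl) ∈ refGen (arrTy α' (τw d)) (arrTy α' (τr d))) ∧
      (∀ j, ∀ _hj : j < k, ∀ Ψ' : HPT j, ∀ ls' : MethName → Loc,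
        StExt ⟨k, Ψ⟩ ⟨j, Ψ'⟩ →
        (∀ e ∈ E, Ψ'.lookA j (ls' e) = Ψ.lookA j (ls e)) →
        (⟨j, Ψ'.trunc j, CVal.mkVObj E ls'⟩ : Triple) ∈ α')
  termination_by k
  decreasing_by exact _hlt

def objTyG (D : Finset MethName) (τw τr : MethName → PreType) : PreType :=
  {t | objSliceG D τw τr t.1 t.2.1 t.2.2}

/-- Non-expansive type constructors. -/
def NonExpansive (F : PreType → PreType) : Prop :=
  ∀ τ : PreType, IsSemType τ → ∀ k : ℕ, papprox (F τ) k = papprox (F (papprox τ k)) k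

/-- `F` maps semantic types to semantic types. -/
def SemPreserving (F : PreType → PreType) : Prop :=
  ∀ τ : PreType, IsSemType τ → IsSemType (F τ)

/-- Bounded universal types `∀_α F`. -/
def allTy (α : PreType) (F : PreType → PreType) : PreType :=
  {t | ∃ a : Tm, t.2.2.1 = Tm.tlam a ∧
    ∀ (j : ℕ) (Ψ' : HPT j), Ψ'.IsTy → ∀ τ : PreType, IsSemType τ →
      StExt ⟨t.1, t.2.1⟩ ⟨j, Ψ'⟩ → papprox τ j ⊆ papprox α j →
      ∀ i < j, HasTypeAt a (Ψ'.trunc i) (F τ)}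

/-- Bounded existential types `∃_α F`. -/
def exTy (α : PreType) (F : PreType → PreType) : PreType :=
  {t | ∃ v : CVal, t.2.2.1 = Tm.pack v.1 ∧
    ∃ τ : PreType, IsSemType τ ∧ papprox τ t.1 ⊆ papprox α t.1 ∧
      ∀ j < t.1, (⟨j, t.2.1.trunc j, v⟩ : Triple) ∈ F τ}

/-- Iso-recursive types `μF` (membership of `(k, Ψ, w)`). -/
def muMem (F : PreType → PreType) (k : ℕ) (Ψ : HPT k) (w : CVal) : Prop :=
  ∃ v : CVal, w.1 = Tm.fold v.1 ∧
    ∀ j, j < k →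
      (⟨j, Ψ.trunc j, v⟩ : Triple) ∈
        F {t : Triple | ∃ _hlt : t.1 < k, muMem F t.1 t.2.1 t.2.2}
  termination_by k
  decreasing_by exact _hlt

def muTy (F : PreType → PreType) : PreType := {t | muMem F t.1 t.2.1 t.2.2}

/-- The defining property of the object type `[m_d :ν_d τ_d]_{d∈D}` (fixed-point form). -/
def ObjMemProp (D : Finset MethName) (ν : MethName → Variance) (τs : MethName → PreType)
    (α : PreType) (k : ℕ) (Ψ : HPT k) (w : CVal) : Prop :=
  ∃ (E : Finset MethName) (ls : MethName → Loc),
    w.1 = Tm.vobj E ls ∧ D ⊆ E ∧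
    ∃ α' : PreType, IsSemType α' ∧
      papprox α' k ⊆ papprox α k ∧
      (∀ d ∈ D, (⟨k, Ψ, ls d⟩ : RefEl) ∈ refTy (ν d) (arrTy α' (τs d))) ∧
      (∀ j < k, ∀ Ψ' : HPT j, ∀ ls' : MethName → Loc,
        StExt ⟨k, Ψ⟩ ⟨j, Ψ'⟩ →
        (∀ e ∈ E, Ψ'.lookA j (ls' e) = Ψ.lookA j (ls e)) →
        (⟨j, Ψ'.trunc j, CVal.mkVObj E ls'⟩ : Triple) ∈ α')

/-- `α` satisfies the recursive specification of the object type. -/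
def ObjFix (D : Finset MethName) (ν : MethName → Variance) (τs : MethName → PreType)
    (α : PreType) : Prop :=
  ∀ t : Triple, t ∈ α ↔ ObjMemProp D ν τs α t.1 t.2.1 t.2.2

/-- `α` satisfies the defining equivalence of the recursive type `μF` and
consists only of `fold`-values. -/
def MuFix (F : PreType → PreType) (α : PreType) : Prop :=
  (∀ t ∈ α, ∃ v : Tm, t.2.2.1 = Tm.fold v) ∧
  ∀ (k : ℕ) (Ψ : HPT k) (v : CVal) (hv : IsVal (Tm.fold v.1) ∧ fv (Tm.fold v.1) = ∅),
    (⟨k, Ψ, ⟨Tm.fold v.1, hv⟩⟩ : Triple) ∈ α ↔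
      ∀ j < k, (⟨j, Ψ.trunc j, v⟩ : Triple) ∈ F α

/-! # The syntactic type system -/

inductive SType : Type where
  | tvar : ℕ → SType
  | top : SType
  | bot : SType
  | arr : SType → SType → SType
  | obj : Finset MethName → (MethName → Variance) → (MethName → SType) → SType
  | mu : ℕ → SType → SType
  | all : ℕ → SType → SType → SType
  | ex : ℕ → SType → SType → SType

/-- Free type variables of a syntactic type. -/
def ftv : SType → Set ℕ
  | .tvar X => {X}
  | .top => ∅
  | .bot => ∅
  | .arr A B => ftv A ∪ ftv B
  | .obj D _ As => ⋃ d ∈ D, ftv (As d)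
  | .mu X A => ftv A \ {X}
  | .all X A B => ftv A ∪ (ftv B \ {X})
  | .ex X A B => ftv A ∪ (ftv B \ {X})

/-- Substitution `A[X ↦ C]` of a type for a type variable. -/
def tsubst : SType → ℕ → SType → SType
  | .tvar Y, X, C => if Y = X then C else .tvar Y
  | .top, _, _ => .top
  | .bot, _, _ => .bot
  | .arr A B, X, C => .arr (tsubst A X C) (tsubst B X C)
  | .obj D ν As, X, C => .obj D ν fun d => tsubst (As d) X C
  | .mu Y A, X, C => if Y = X then .mu Y A else .mu Y (tsubst A X C)
  | .all Y A B, X, C => .all Y (tsubst A X C) (if Y = X then B else tsubst B X C)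
  | .ex Y A B, X, C => .ex Y (tsubst A X C) (if Y = X then B else tsubst B X C)

/-- Context bindings: `X <: A` and `x : A`. -/
inductive Bind : Type where
  | tv : ℕ → SType → Bind
  | v : Var → SType → Bind

abbrev SCtx := List Bind

def tvDom (Γ : SCtx) : Set ℕ := {X | ∃ A, Bind.tv X A ∈ Γ}
def vDom (Γ : SCtx) : Set Var := {x | ∃ A, Bind.v x A ∈ Γ}

/-- Well-formed typing contexts. -/
inductive WfCtx : SCtx → Prop where
  | nil : WfCtx []
  | consV {Γ : SCtx} {x : Var} {A : SType} :
      WfCtx Γ → x ∉ vDom Γ → ftv A ⊆ tvDom Γ → WfCtx (Bind.v x A :: Γ)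
  | consT {Γ : SCtx} {X : ℕ} {A : SType} :
      WfCtx Γ → X ∉ tvDom Γ → ftv A ⊆ tvDom Γ → WfCtx (Bind.tv X A :: Γ)

/-- Well-formed types. -/
def WfTy (Γ : SCtx) (A : SType) : Prop := WfCtx Γ ∧ ftv A ⊆ tvDom Γ

/-- The subtyping judgement `Γ ⊢ A <: B`. -/
inductive Sub : SCtx → SType → SType → Prop where
  | refl {Γ A} : WfTy Γ A → Sub Γ A A
  | trans {Γ A A' B} : Sub Γ A A' → Sub Γ A' B → Sub Γ A B
  | top {Γ A} : WfTy Γ A → Sub Γ A .top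
  | bot {Γ A} : WfTy Γ A → Sub Γ .bot A
  | tvar {Γ X A} : WfCtx Γ → Bind.tv X A ∈ Γ → Sub Γ (.tvar X) A
  | arr {Γ A A' B B'} : Sub Γ A' A → Sub Γ B B' → Sub Γ (.arr A B) (.arr A' B')
  | obj {Γ} {D E : Finset MethName} {ν : MethName → Variance} {As Bs : MethName → SType} :
      E ⊆ D →
      (∀ e ∈ E, (ν e = .cov ∨ ν e = .inv) → Sub Γ (As e) (Bs e)) →
      (∀ e ∈ E, (ν e = .con ∨ ν e = .inv) → Sub Γ (Bs e) (As e)) →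
      Sub Γ (.obj D ν As) (.obj E ν Bs)
  | objvar {Γ} {D : Finset MethName} {ν ν' : MethName → Variance} {As : MethName → SType} :
      (∀ d ∈ D, ν d = .inv ∨ ν d = ν' d) →
      Sub Γ (.obj D ν As) (.obj D ν' As)
  | mu {Γ X Y A B} : WfTy Γ (.mu X A) → WfTy Γ (.mu Y B) →
      Sub (Bind.tv X (.tvar Y) :: Bind.tv Y .top :: Γ) A B →
      Sub Γ (.mu X A) (.mu Y B)
  | all {Γ X A A' B B'} : Sub Γ A' A → Sub (Bind.tv X A' :: Γ) B B' →
      Sub Γ (.all X A B) (.all X A' B')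
  | ex {Γ X A A' B B'} : Sub Γ A A' → Sub (Bind.tv X A :: Γ) B B' →
      Sub Γ (.ex X A B) (.ex X A' B')

/-- Type-annotated (source) terms. -/
inductive STm : Type where
  | var : Var → STm
  | obj : Finset MethName → (MethName → Variance) → (MethName → SType) →
      (MethName → Var) → (MethName → STm) → STm
  | inv : STm → MethName → STm
  | upd : STm → MethName → Var → SType → STm → STm
  | clone : STm → STm
  | lam : Var → SType → STm → STm
  | app : STm → STm → STm
  | fold : SType → STm → STm
  | unfd : SType → STm → STm
  | tlam : ℕ → SType → STm → STm
  | tapp : STm → SType → STm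
  | pack : ℕ → SType → SType → STm → SType → STm
  | opn : STm → ℕ → SType → Var → SType → STm → SType → STm

/-- Erasure of all type annotations. -/
def erase : STm → Tm
  | .var x => .var x
  | .obj D _ _ xs bs => .obj D xs fun d => erase (bs d)
  | .inv a m => .inv (erase a) m
  | .upd a m x _ b => .upd (erase a) m x (erase b)
  | .clone a => .clone (erase a)
  | .lam x _ b => .lam x (erase b)
  | .app a b => .app (erase a) (erase b)
  | .fold _ a => .fold (erase a)
  | .unfd _ a => .unfd (erase a)
  | .tlam _ _ b => .tlam (erase b)
  | .tapp a _ => .tapp (erase a)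
  | .pack _ _ _ a _ => .pack (erase a)
  | .opn a _ _ x _ b _ => .opn (erase a) x (erase b)

/-- Substitution `a[X ↦ C]` of a type for a type variable inside a term. -/
def stsubst : STm → ℕ → SType → STm
  | .var x, _, _ => .var x
  | .obj D ν As xs bs, X, C =>
      .obj D ν (fun d => tsubst (As d) X C) xs fun d => stsubst (bs d) X C
  | .inv a m, X, C => .inv (stsubst a X C) m
  | .upd a m x A b, X, C => .upd (stsubst a X C) m x (tsubst A X C) (stsubst b X C)
  | .clone a, X, C => .clone (stsubst a X C)
  | .lam x A b, X, C => .lam x (tsubst A X C) (stsubst b X C)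
  | .app a b, X, C => .app (stsubst a X C) (stsubst b X C)
  | .fold A a, X, C => .fold (tsubst A X C) (stsubst a X C)
  | .unfd A a, X, C => .unfd (tsubst A X C) (stsubst a X C)
  | .tlam Y A b, X, C =>
      .tlam Y (tsubst A X C) (if Y = X then b else stsubst b X C)
  | .tapp a A, X, C => .tapp (stsubst a X C) (tsubst A X C)
  | .pack Y A B a B', X, C =>
      .pack Y (tsubst A X C) (tsubst B X C)
        (if Y = X then a else stsubst a X C) (if Y = X then B' else tsubst B' X C)
  | .opn a Y A x B b Cr, X, C =>
      .opn (stsubst a X C) Y (tsubst A X C) x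
        (if Y = X then B else tsubst B X C) (if Y = X then b else stsubst b X C)
        (tsubst Cr X C)

/-- The typing judgement `Γ ⊢ a : A`. -/
inductive Ty : SCtx → STm → SType → Prop where
  | sub {Γ a A B} : Ty Γ a A → Sub Γ A B → Ty Γ a B
  | var {Γ x A} : WfCtx Γ → Bind.v x A ∈ Γ → Ty Γ (.var x) A
  | lam {Γ x A b B} : Ty (Bind.v x A :: Γ) b B → Ty Γ (.lam x A b) (.arr A B)
  | app {Γ a b A B} : Ty Γ a (.arr B A) → Ty Γ b B → Ty Γ (.app a b) A
  | obj {Γ} {D : Finset MethName} {ν : MethName → Variance} {As : MethName → SType}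
      {xs : MethName → Var} {bs : MethName → STm} :
      (∀ d ∈ D, Ty (Bind.v (xs d) (.obj D ν As) :: Γ) (bs d) (As d)) →
      Ty Γ (.obj D ν As xs bs) (.obj D ν As)
  | clone {Γ a} {D : Finset MethName} {ν : MethName → Variance} {As : MethName → SType} :
      Ty Γ a (.obj D ν As) → Ty Γ (.clone a) (.obj D ν As)
  | inv {Γ a} {D : Finset MethName} {ν : MethName → Variance} {As : MethName → SType}
      {e : MethName} :
      Ty Γ a (.obj D ν As) → e ∈ D → (ν e = .cov ∨ ν e = .inv) →
      Ty Γ (.inv a e) (As e)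
  | upd {Γ a} {D : Finset MethName} {ν : MethName → Variance} {As : MethName → SType}
      {e : MethName} {x : Var} {b : STm} :
      Ty Γ a (.obj D ν As) → e ∈ D →
      Ty (Bind.v x (.obj D ν As) :: Γ) b (As e) → (ν e = .con ∨ ν e = .inv) →
      Ty Γ (.upd a e x (.obj D ν As) b) (.obj D ν As)
  | unfold {Γ a X A} :
      Ty Γ a (.mu X A) → Ty Γ (.unfd (.mu X A) a) (tsubst A X (.mu X A))
  | fold {Γ a X A} :
      Ty Γ a (tsubst A X (.mu X A)) → Ty Γ (.fold (.mu X A) a) (.mu X A)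
  | tabs {Γ X A b B} : Ty (Bind.tv X A :: Γ) b B → Ty Γ (.tlam X A b) (.all X A B)
  | tapp {Γ a X A B A'} :
      Ty Γ a (.all X A B) → Sub Γ A' A → Ty Γ (.tapp a A') (tsubst B X A')
  | pack {Γ X A C a B} : Sub Γ C A → Ty Γ (stsubst a X C) (tsubst B X C) →
      Ty Γ (.pack X A C a B) (.ex X A B)
  | opn {Γ a X A x B b C} : Ty Γ a (.ex X A B) → WfTy Γ C →
      Ty (Bind.v x B :: Bind.tv X A :: Γ) b C →
      Ty Γ (.opn a X A x B b C) C

/-! # Interpretation of syntactic types -/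

/-- The interpretation `⟦A⟧η` of a syntactic type. -/
def interp : SType → (ℕ → PreType) → PreType
  | .tvar X, η => η X
  | .top, _ => topTy
  | .bot, _ => botTy
  | .arr A B, η => arrTy (interp A η) (interp B η)
  | .obj D ν As, η => objTy D ν fun d => interp (As d) η
  | .mu X A, η => muTy fun α => interp A (Function.update η X α)
  | .all X A B, η => allTy (interp A η) fun α => interp B (Function.update η X α)
  | .ex X A B, η => exTy (interp A η) fun α => interp B (Function.update η X α)

/-- `η ⊨ Γ`: `η` maps type variables to semantic types and respects the bounds in `Γ`. -/
def EnvModels (η : ℕ → PreType) (Γ : SCtx) : Prop :=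
  (∀ X, IsSemType (η X)) ∧ ∀ X A, Bind.tv X A ∈ Γ → η X ⊆ interp A η

/-- The semantic type environment `⟦Γ⟧η`. -/
def interpCtx (Γ : SCtx) (η : ℕ → PreType) : SemEnv :=
  fun x =>
    Γ.findSome? fun b =>
      match b with
      | Bind.v y A => if y = x then some (interp A η) else none
      | _ => none

/-! ### Auxiliary lemmas for SemInv -/

section Aux

theorem stepN_head : ∀ {n : ℕ} {c c'' : Config}, StepN (n + 1) c c'' →
    ∃ c', Step c c' ∧ StepN n c' c'' := by
  intro n
  induction n with
  | zero =>
    intro c c'' h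
    cases h with
    | tail hs hl => cases hs; exact ⟨_, hl, .refl _⟩
  | succ p ih =>
    intro c c'' h
    cases h with
    | tail hs hl =>
      obtain ⟨c0, s0, rest⟩ := ih hs
      exact ⟨c0, s0, rest.tail hl⟩

theorem isVal_plug {E : ECtx} {r : Tm} (h : IsVal (E.plug r)) : IsVal r := by
  induction E with
  | hole => exact h
  | inv E m ih => simp only [ECtx.plug] at h; cases h
  | upd E m x b ih => simp only [ECtx.plug] at h; cases h
  | clone E ih => simp only [ECtx.plug] at h; cases h
  | appL E b ih => simp only [ECtx.plug] at h; cases h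
  | appR v hv E ih => simp only [ECtx.plug] at h; cases h
  | fold E ih => simp only [ECtx.plug] at h; cases h with | fold h => exact ih h
  | unfd E ih => simp only [ECtx.plug] at h; cases h
  | tapp E ih => simp only [ECtx.plug] at h; cases h
  | pack E ih => simp only [ECtx.plug] at h; cases h with | pack h => exact ih h
  | opn E x b ih => simp only [ECtx.plug] at h; cases h

theorem head_not_val {h : Heap} {r : Tm} {c : Config} (hh : Head (h, r) c) : ¬ IsVal r := by
  intro hv; cases hh <;> cases hv

theorem val_irred {h : Heap} {v : Tm} (hv : IsVal v) : Irred (h, v) := by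
  rintro ⟨c', hs⟩
  cases hs with
  | ctx E hh => exact head_not_val hh (isVal_plug hv)

theorem step_elim {c1 c2 : Config} (hs : Step c1 c2) :
    ∃ (E : ECtx) (h h' : Heap) (a a' : Tm),
      c1 = (h, E.plug a) ∧ c2 = (h', E.plug a') ∧ Head (h, a) (h', a') := by
  cases hs with
  | ctx E hh => exact ⟨E, _, _, _, _, rfl, rfl, hh⟩

theorem step_inv_ctx {h h' : Heap} {a a' : Tm} (e : MethName) (hs : Step (h, a) (h', a')) :
    Step (h, .inv a e) (h', .inv a' e) := by
  obtain ⟨E, h0, h0', b, b', e1, e2, hh⟩ := step_elim hs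
  injection e1 with e11 e12
  injection e2 with e21 e22
  subst e11; subst e12; subst e21; subst e22
  exact Step.ctx (ECtx.inv E e) hh

theorem irred_inv {h : Heap} {a : Tm} {e : MethName} (hi : Irred (h, .inv a e)) :
    Irred (h, a) := by
  rintro ⟨⟨h', a'⟩, hs⟩
  exact hi ⟨_, step_inv_ctx e hs⟩

theorem step_inv_cases {h : Heap} {c : Tm} {e : MethName} {c2 : Config}
    (hs : Step (h, .inv c e) c2) :
    (∃ h' c', Step (h, c) (h', c') ∧ c2 = (h', .inv c' e)) ∨
    (∃ (E : Finset MethName) (ls : MethName → Loc) (f : Tm),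
      c = .vobj E ls ∧ e ∈ E ∧ h.get? (ls e) = some f ∧
      c2 = (h, .app f (.vobj E ls))) := by
  obtain ⟨E, h0, h0', b, b', e1, e2, hh⟩ := step_elim hs
  injection e1 with e11 e12
  subst e11; subst e2
  cases E with
  | hole =>
    simp only [ECtx.plug] at e12 ⊢
    subst e12
    cases hh with
    | inv hE hget => exact Or.inr ⟨_, _, _, rfl, hE, hget, rfl⟩
  | inv E' m =>
    simp only [ECtx.plug] at e12 ⊢
    injection e12 with e13 e14
    subst e13; subst e14
    exact Or.inl ⟨_, _, Step.ctx E' hh, rfl⟩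
  | upd E' m x b0 => simp only [ECtx.plug] at e12; cases e12
  | clone E' => simp only [ECtx.plug] at e12; cases e12
  | appL E' b0 => simp only [ECtx.plug] at e12; cases e12
  | appR v hv E' => simp only [ECtx.plug] at e12; cases e12
  | fold E' => simp only [ECtx.plug] at e12; cases e12
  | unfd E' => simp only [ECtx.plug] at e12; cases e12
  | tapp E' => simp only [ECtx.plug] at e12; cases e12
  | pack E' => simp only [ECtx.plug] at e12; cases e12
  | opn E' x b0 => simp only [ECtx.plug] at e12; cases e12

theorem step_app_lam {h : Heap} {x : Var} {bb v2 : Tm} (hv2 : IsVal v2) {c2 : Config}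
    (hs : Step (h, .app (.lam x bb) v2) c2) : c2 = (h, subst1 bb x v2) := by
  obtain ⟨E, h0, h0', b, b', e1, e2, hh⟩ := step_elim hs
  injection e1 with e11 e12
  subst e11; subst e2
  cases E with
  | hole =>
    simp only [ECtx.plug] at e12 ⊢
    subst e12
    cases hh with
    | beta hv => rfl
  | appL E' b0 =>
    simp only [ECtx.plug] at e12
    injection e12 with e13 e14
    exact absurd (isVal_plug (e13 ▸ IsVal.lam x bb)) (head_not_val hh)
  | appR v hv E' =>
    simp only [ECtx.plug] at e12
    injection e12 with e13 e14
    exact absurd (isVal_plug (e14 ▸ hv2)) (head_not_val hh)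
  | inv E' m => simp only [ECtx.plug] at e12; cases e12
  | upd E' m y b0 => simp only [ECtx.plug] at e12; cases e12
  | clone E' => simp only [ECtx.plug] at e12; cases e12
  | fold E' => simp only [ECtx.plug] at e12; cases e12
  | unfd E' => simp only [ECtx.plug] at e12; cases e12
  | tapp E' => simp only [ECtx.plug] at e12; cases e12
  | pack E' => simp only [ECtx.plug] at e12; cases e12
  | opn E' y b0 => simp only [ECtx.plug] at e12; cases e12

theorem inv_decomp {e : MethName} {n : ℕ} {c1 c2 : Config} (hs : StepN n c1 c2) :
    ∀ {h : Heap} {a : Tm}, c1 = (h, Tm.inv a e) →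
    (∃ h' a', c2 = (h', Tm.inv a' e) ∧ StepN n (h, a) (h', a')) ∨
    (∃ (i : ℕ) (h1 : Heap) (E : Finset MethName) (ls : MethName → Loc) (f : Tm),
      i + 1 ≤ n ∧ StepN i (h, a) (h1, .vobj E ls) ∧ e ∈ E ∧
      h1.get? (ls e) = some f ∧
      StepN (n - (i + 1)) (h1, .app f (.vobj E ls)) c2) := by
  induction hs with
  | refl c => rintro h a rfl; exact Or.inl ⟨h, a, rfl, .refl _⟩
  | @tail n c c' c'' hpre hlast ih =>
    rintro h a rfl
    rcases ih rfl with ⟨h2, a2, rfl, hsa⟩ | ⟨i, h1, E, ls, f, hi, hsa, heE, hget, hrest⟩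
    · rcases step_inv_cases hlast with ⟨h3, a3, hst, rfl⟩ | ⟨E, ls, f, rfl, heE, hget, rfl⟩
      · exact Or.inl ⟨h3, a3, rfl, hsa.tail hst⟩
      · refine Or.inr ⟨n, h2, E, ls, f, Nat.le_refl _, hsa, heE, hget, ?_⟩
        rw [Nat.sub_self]
        exact .refl _
    · refine Or.inr ⟨i, h1, E, ls, f, by omega, hsa, heE, hget, ?_⟩
      rw [show n + 1 - (i + 1) = (n - (i + 1)) + 1 from by omega]
      exact hrest.tail hlast

theorem mem_papprox {τ : PreType} {k : ℕ} {t : Triple} :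
    t ∈ papprox τ k ↔ t ∈ τ ∧ t.1 < k := Iff.rfl

theorem out_mk' {k : ℕ} (S : Set ((j : Fin k) × (HPT j.1 × CVal))) :
    (Approx.mk' S).out = S := by
  simp [Approx.out, Approx.mk']

theorem seg_toApprox (τ : PreType) (m : ℕ) : (toApprox τ m).seg = papprox τ m := by
  ext t
  constructor
  · rintro ⟨hlt, hmem⟩
    unfold toApprox at hmem
    rw [out_mk'] at hmem
    exact ⟨hmem, hlt⟩
  · rintro ⟨hτ, hlt⟩
    refine ⟨hlt, ?_⟩
    unfold toApprox
    rw [out_mk']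
    exact hτ

theorem toApprox_papprox (τ : PreType) {n m : ℕ} (h : n ≤ m) :
    toApprox (papprox τ m) n = toApprox τ n := by
  unfold toApprox
  refine congrArg Approx.mk' ?_
  ext p
  exact ⟨fun hp => hp.1, fun hp => ⟨hp, lt_of_lt_of_le p.1.2 h⟩⟩

theorem papprox_papprox (τ : PreType) {n m : ℕ} (h : n ≤ m) :
    papprox (papprox τ m) n = papprox τ n := by
  ext t
  constructor
  · rintro ⟨⟨h1, _⟩, h3⟩; exact ⟨h1, h3⟩
  · rintro ⟨h1, h2⟩; exact ⟨⟨h1, lt_of_lt_of_le h2 h⟩, h2⟩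

theorem dom_trunc {k : ℕ} (Ψ : HPT k) (m : ℕ) : (Ψ.trunc m).dom = Ψ.dom := by
  ext l
  simp only [HPT.dom, HPT.trunc, Set.mem_setOf_eq, ne_eq, Option.map_eq_none_iff]

theorem lookA_trunc {k : ℕ} (Ψ : HPT k) {n m : ℕ} (h : n ≤ m) (l : Loc) :
    (Ψ.trunc m).lookA n l = Ψ.lookA n l := by
  simp only [HPT.lookA, HPT.look, HPT.trunc, Option.map_map]
  cases hl : Ψ.1 l with
  | none => rfl
  | some S => simp [Function.comp, seg_toApprox, papprox_papprox _ h]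

theorem trunc_trunc {k : ℕ} (Ψ : HPT k) {n m : ℕ} (h : n ≤ m) :
    (Ψ.trunc m).trunc n = Ψ.trunc n := by
  apply Subtype.ext
  funext l
  simp only [HPT.trunc]
  cases hl : Ψ.1 l with
  | none => rfl
  | some S => simp [seg_toApprox, toApprox_papprox _ h]

theorem stExt_trunc {k : ℕ} (Ψ : HPT k) {m : ℕ} (h : m ≤ k) :
    StExt ⟨k, Ψ⟩ ⟨m, Ψ.trunc m⟩ :=
  ⟨h, fun l hl => by rwa [dom_trunc], fun l _ => lookA_trunc Ψ (le_refl m) l⟩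

theorem stExt_trunc_trunc {k : ℕ} (Ψ : HPT k) {n m : ℕ} (h : n ≤ m) :
    StExt ⟨m, Ψ.trunc m⟩ ⟨n, Ψ.trunc n⟩ :=
  ⟨h, fun l hl => by rwa [dom_trunc] at hl ⊢,
    fun l _ => by rw [lookA_trunc Ψ (le_refl n), lookA_trunc Ψ h]⟩

theorem lookA_mono {k k' : ℕ} {Ψ : HPT k} {Ψ' : HPT k'} {m n : ℕ} {l : Loc} (h : n ≤ m)
    (heq : Ψ.lookA m l = Ψ'.lookA m l) : Ψ.lookA n l = Ψ'.lookA n l := by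
  unfold HPT.lookA at heq ⊢
  cases h1 : Ψ.look l with
  | none =>
    cases h2 : Ψ'.look l with
    | none => rfl
    | some τ' => rw [h1, h2] at heq; simp at heq
  | some τ =>
    cases h2 : Ψ'.look l with
    | none => rw [h1, h2] at heq; simp at heq
    | some τ' =>
      rw [h1, h2] at heq
      simp only [Option.map_some, Option.some.injEq] at heq ⊢
      rw [← papprox_papprox τ h, ← papprox_papprox τ' h, heq]

theorem stExt_trans {s t u : St} (h1 : StExt s t) (h2 : StExt t u) : StExt s u := by
  obtain ⟨hk1, hd1, hl1⟩ := h1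
  obtain ⟨hk2, hd2, hl2⟩ := h2
  exact ⟨le_trans hk2 hk1, subset_trans hd1 hd2, fun l hl =>
    (hl2 l (hd1 hl)).trans (lookA_mono hk2 (hl1 l hl))⟩

theorem isSemType_papprox {τ : PreType} (h : IsSemType τ) (m : ℕ) :
    IsSemType (papprox τ m) := by
  rintro t ⟨ht, hlt⟩ j Ψ' hext
  exact ⟨h t ht j Ψ' hext, lt_of_le_of_lt hext.1 hlt⟩

theorem trunc_isTy {k : ℕ} {Ψ : HPT k} (h : Ψ.IsTy) (m : ℕ) : (Ψ.trunc m).IsTy := by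
  intro l S' hS'
  simp only [HPT.trunc] at hS'
  cases hl : Ψ.1 l with
  | none => rw [hl] at hS'; simp at hS'
  | some S =>
    rw [hl] at hS'
    simp only [Option.map_some, Option.some.injEq] at hS'
    rw [← hS', seg_toApprox]
    exact isSemType_papprox (h l S hl) m

theorem heapOk_trunc {h : Heap} {k : ℕ} {Ψ : HPT k} (hok : HeapOk h Ψ) {m : ℕ}
    (hm : m ≤ k) : HeapOk h (Ψ.trunc m) := by
  refine ⟨fun l hl => hok.1 l (by rwa [dom_trunc] at hl), ?_⟩
  intro j hj l S' hS' v hv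
  simp only [HPT.trunc] at hS'
  cases hl : Ψ.1 l with
  | none => rw [hl] at hS'; simp at hS'
  | some S =>
    rw [hl] at hS'
    simp only [Option.map_some, Option.some.injEq] at hS'
    rw [trunc_trunc Ψ (le_of_lt hj), ← hS', seg_toApprox]
    exact ⟨hok.2 j (lt_of_lt_of_le hj hm) l S hl v hv, hj⟩

end Aux

/-- **(SemInv) Method invocation.** If `Σ ⊨ a : [m_d :ν_d τ_d]_{d∈D}`, `e ∈ D` and
`ν_e ∈ {cov, inv}`, then `Σ ⊨ a.m_e : τ_e`. -/
theorem semInv (D : Finset MethName) (ν : MethName → Variance) (τs : MethName → PreType)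
    (hτ : ∀ d ∈ D, IsSemType (τs d)) (Γ : SemEnv) (hΓ : EnvSem Γ)
    (a : Tm) (e : MethName) (he : e ∈ D)
    (hν : ν e = Variance.cov ∨ ν e = Variance.inv)
    (h : SemJudg Γ a (objTy D ν τs)) :
    SemJudg Γ (Tm.inv a e) (τs e) := by
  obtain ⟨hfv, hsem⟩ := h
  refine ⟨hfv, ?_⟩
  intro k Ψ hΨty σ hσ
  have ha := hsem k Ψ hΨty σ hσ
  intro j hj h0 h' b hok hsteps hirr
  rcases inv_decomp hsteps rfl with ⟨h2, a2, heq, hsa⟩ |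
    ⟨i, h1, E, ls, ftm, hile, hsa, heE, hget, hrest⟩
  · -- the invocand never became a value: contradiction with irreducibility
    injection heq with e1 e2
    subst e1; subst e2
    have hirr2 : Irred (h', a2) := irred_inv hirr
    obtain ⟨Ψ1, hΨ1ty, hext1, hok1, hb, hmem⟩ := ha j hj h0 h' a2 hok hsa hirr2
    have hmem' : objSlice D ν τs (k - j) Ψ1 ⟨a2, hb⟩ := hmem
    replace hmem' := (objSlice.eq_1 _ _ _ _ _ _).mp hmem'
    obtain ⟨E, ls, hveq, hDE, α', -, -, href, -⟩ := hmem'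
    have hre := href e he
    have hSex : ∃ S, Ψ1.1 (ls e) = some S := by
      rcases hν with hν' | hν' <;> rw [hν'] at hre
      · obtain ⟨S, hS, -⟩ := hre; exact ⟨S, hS⟩
      · obtain ⟨S, hS, -⟩ := hre; exact ⟨S, hS⟩
    obtain ⟨S, hS⟩ := hSex
    have hdom : ls e ∈ Ψ1.dom := by simp [HPT.dom, hS]
    obtain ⟨cv, hcv⟩ := Option.ne_none_iff_exists'.mp (hok1.1 _ hdom)
    have hg : h'.get? (ls e) = some cv.1 := by
      simp only [Heap.get?, hcv, Option.map_some]
      rfl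
    have hstep : Step (h', Tm.inv a2 e) (h', .app cv.1 (.vobj E ls)) := by
      have hveq' : a2 = Tm.vobj E ls := hveq
      rw [hveq']
      exact Step.ctx ECtx.hole (Head.inv (hDE he) hg)
    exact absurd ⟨_, hstep⟩ hirr
  · -- main case: the invocand reduced to an object and the method was invoked
    obtain ⟨Ψ1, hΨ1ty, hext1, hok1, hb, hmem⟩ :=
      ha i (by omega) h0 h1 (.vobj E ls) hok hsa (val_irred (IsVal.vobj E ls))
    have hmem' : objSlice D ν τs (k - i) Ψ1 ⟨.vobj E ls, hb⟩ := hmem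
    replace hmem' := (objSlice.eq_1 _ _ _ _ _ _).mp hmem'
    obtain ⟨E', ls', hveq, hDE, α', hα'sem, hαsub, href, hobj3⟩ := hmem'
    have hveq' : Tm.vobj E ls = Tm.vobj E' ls' := hveq
    injection hveq' with e1 e2
    subst e1; subst e2
    have hre := href e he
    have hSex : ∃ S, Ψ1.1 (ls e) = some S ∧
        papprox (Approx.seg S) (k - i) ⊆ papprox (arrTy α' (τs e)) (k - i) := by
      rcases hν with hν' | hν' <;> rw [hν'] at hre
      · exact hre
      · obtain ⟨S, hS, h2⟩ := hre; exact ⟨S, hS, h2.le⟩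
    obtain ⟨S, hS, hsub⟩ := hSex
    -- the stored method
    simp only [Heap.get?] at hget
    obtain ⟨fcv, hfcv, hfval⟩ := Option.map_eq_some_iff.mp hget
    subst hfval
    have hik : i < k := by omega
    have hfS : (⟨k - i - 1, Ψ1.trunc (k - i - 1), fcv⟩ : Triple) ∈ Approx.seg S :=
      hok1.2 (k - i - 1) (by omega) (ls e) S hS fcv hfcv
    have hfarr : (⟨k - i - 1, Ψ1.trunc (k - i - 1), fcv⟩ : Triple) ∈ arrTy α' (τs e) :=
      (hsub ⟨hfS, show k - i - 1 < k - i by omega⟩).1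
    obtain ⟨x, bb, hlam, hbody⟩ := hfarr
    -- remaining steps after the invocation head step
    rcases Nat.eq_zero_or_eq_succ_pred (j - (i + 1)) with hr0 | hr1
    · -- no beta step happened: contradiction with irreducibility
      rw [hr0] at hrest
      cases hrest
      have hstep : Step (h', Tm.app fcv.1 (Tm.vobj E ls)) (h', subst1 bb x (Tm.vobj E ls)) := by
        rw [show fcv.1 = Tm.lam x bb from hlam]
        exact Step.ctx ECtx.hole (Head.beta (IsVal.vobj E ls))
      exact absurd ⟨_, hstep⟩ hirr
    · set r := (j - (i + 1)).pred with hrdef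
      rw [hr1] at hrest
      obtain ⟨c1, hst1, hrest'⟩ := stepN_head hrest
      rw [show fcv.1 = Tm.lam x bb from hlam] at hst1
      have hc1 := step_app_lam (IsVal.vobj E ls) hst1
      subst hc1
      have hij : i + 2 ≤ j := by omega
      -- the object belongs to α'
      have hobjα : (⟨k - i - 2, Ψ1.trunc (k - i - 2), ⟨Tm.vobj E ls, hb⟩⟩ : Triple) ∈ α' := by
        have hx := hobj3 (k - i - 2) (by omega) (Ψ1.trunc (k - i - 2)) ls
          (stExt_trunc Ψ1 (by omega))
          (fun e' _ => lookA_trunc Ψ1 (le_refl (k - i - 2)) (ls e'))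
        rw [trunc_trunc Ψ1 (le_refl (k - i - 2))] at hx
        have hcveq : CVal.mkVObj E ls = (⟨Tm.vobj E ls, hb⟩ : CVal) := Subtype.ext rfl
        rwa [hcveq] at hx
      have hbodyty : HasTypeAt (subst1 bb x (Tm.vobj E ls)) (Ψ1.trunc (k - i - 2)) (τs e) :=
        hbody (k - i - 2) (show k - i - 2 < k - i - 1 by omega) (Ψ1.trunc (k - i - 2))
          (trunc_isTy hΨ1ty _) ⟨Tm.vobj E ls, hb⟩
          (stExt_trunc_trunc Ψ1 (show k - i - 2 ≤ k - i - 1 by omega)) hobjα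
      have hrlt : r < k - i - 2 := by omega
      obtain ⟨Ψ', hΨ'ty, hext3, hok', hbval, hbmem⟩ :=
        hbodyty r hrlt h1 h' b (heapOk_trunc hok1 (by omega)) hrest' hirr
      rw [show k - j = k - i - 2 - r from by omega]
      refine ⟨Ψ', hΨ'ty, ?_, hok', hbval, hbmem⟩
      exact stExt_trans (stExt_trans hext1 (stExt_trunc Ψ1 (by omega))) hext3

end ImpObj
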